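/- Let (X, d_X) be an E_X-valued ultrametric space, (Y, d_Y) an E_Y-valued ultrametric space, and (f, φ) a dc-embedding from X to Y. Then f is uniformly continuous (for every ε ∈ E_Y with ε > 0 there is δ ∈ E_X with δ > 0 such that d_X(x,x') < δ implies d_Y(f(x),f(x')) < ε) if and only if φ is continuous at 0 (for every ε ∈ E_Y with ε > 0 there is δ ∈ E_X with δ > 0 such that φ(δ) ≤ ε) or X is uniformly discrete (there is δ ∈ E_X with δ > 0 such that d_X(x,x') ≥ δ for all x ≠ x'). -/
import Mathlib


/-- An `E`-valued ultrametric on `X`, where `E` is a linear order whose least element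
`⊥` plays the role of `0`. -/
def IsUltrametric {X E : Type*} [LinearOrder E] [OrderBot E] (d : X → X → E) : Prop :=
  (∀ x y, d x y = ⊥ ↔ x = y) ∧ (∀ x y, d x y = d y x) ∧
  (∀ x y z, d x z ≤ max (d x y) (d y z))

/-- A dc-embedding `(f, φ)` between ultrametric spaces is uniformly continuous if and
only if the distance part `φ` is continuous at `0`, or the source space is uniformly
discrete. -/
theorem stmt5 {X Y EX EY : Type*} [LinearOrder EX] [OrderBot EX]
    [LinearOrder EY] [OrderBot EY]
    (dX : X → X → EX) (dY : Y → Y → EY)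
    (hdX : IsUltrametric dX) (hdY : IsUltrametric dY)
    (f : X → Y) (hf : Function.Injective f)
    (φ : EX ↪o EY) (hφ0 : φ ⊥ = ⊥)
    (hcompat : ∀ x x' : X, dY (f x) (f x') = φ (dX x x')) :
    (∀ ε : EY, ⊥ < ε → ∃ δ : EX, ⊥ < δ ∧
        ∀ x x' : X, dX x x' < δ → dY (f x) (f x') < ε) ↔
    ((∀ ε : EY, ⊥ < ε → ∃ δ : EX, ⊥ < δ ∧ φ δ ≤ ε) ∨
      (∃ δ : EX, ⊥ < δ ∧ ∀ x x' : X, x ≠ x' → δ ≤ dX x x')) := by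
  constructor
  · intro huc
    by_cases hc : ∀ ε : EY, ⊥ < ε → ∃ δ : EX, ⊥ < δ ∧ φ δ ≤ ε
    · exact Or.inl hc
    · push_neg at hc
      obtain ⟨ε, hε, hall⟩ := hc
      obtain ⟨δ, hδ, hδ'⟩ := huc ε hε
      refine Or.inr ⟨δ, hδ, fun x x' hne => ?_⟩
      by_contra h
      push_neg at h
      have hlt := hδ' x x' h
      rw [hcompat] at hlt
      have hpos : ⊥ < dX x x' := bot_lt_iff_ne_bot.2 (fun hb => hne ((hdX.1 x x').1 hb))
      exact absurd hlt.le (not_le.2 (hall _ hpos))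
  · rintro (hc | ⟨δ, hδ, hd⟩) <;> intro ε hε
    · obtain ⟨δ, hδ, hδ'⟩ := hc ε hε
      refine ⟨δ, hδ, fun x x' h => ?_⟩
      rw [hcompat]
      exact lt_of_lt_of_le (φ.strictMono h) hδ'
    · refine ⟨δ, hδ, fun x x' h => ?_⟩
      have hx : x = x' := by
        by_contra hne
        exact absurd h (not_lt.2 (hd x x' hne))
      rw [hcompat, hx, (hdX.1 x' x').2 rfl, hφ0]
      exact hε
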